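/- Let L be a bounded lattice equipped with a map x ↦ xᶜ that is involutive ((xᶜ)ᶜ = x), antitone (x ≤ y implies yᶜ ≤ xᶜ), and satisfies x ⊓ xᶜ = ⊥ for all x, and with a binary operation △ : L × L → L satisfying (GEQL1) x △ (y △ z) = (x △ y) △ z, (GEQL2) x △ ⊤ = xᶜ and ⊤ △ x = xᶜ, and (GEQL3) x ≤ z and y ≤ z imply x △ y ≤ z. Then L is orthomodular: for all x, y ∈ L with x ≤ y one has y = x ⊔ (y ⊓ xᶜ). -/
import Mathlib


/-- A bounded lattice with an orthocomplementation `oc` (involutive, antitone,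
`x ⊓ oc x = ⊥`) and a symmetric-difference operation `sd` satisfying
(GEQL1)–(GEQL3) is orthomodular: `x ≤ y` implies `y = x ⊔ (y ⊓ oc x)`. -/
theorem stmt18 {L : Type*} [Lattice L] [BoundedOrder L]
    (oc : L → L) (sd : L → L → L)
    (h_inv : ∀ x : L, oc (oc x) = x)
    (h_anti : ∀ x y : L, x ≤ y → oc y ≤ oc x)
    (h_compl : ∀ x : L, x ⊓ oc x = ⊥)
    (hGEQL1 : ∀ x y z : L, sd x (sd y z) = sd (sd x y) z)
    (hGEQL2 : ∀ x : L, sd x ⊤ = oc x ∧ sd ⊤ x = oc x)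
    (hGEQL3 : ∀ x y z : L, x ≤ z → y ≤ z → sd x y ≤ z) :
    ∀ x y : L, x ≤ y → y = x ⊔ (y ⊓ oc x) := by
  have h2 : ∀ x : L, sd x ⊤ = oc x := fun x => (hGEQL2 x).1
  have h2' : ∀ x : L, sd ⊤ x = oc x := fun x => (hGEQL2 x).2
  have ocTop : oc (⊤ : L) = ⊥ := by
    have := h_compl (⊤ : L); simpa using this
  have ocBot : oc (⊥ : L) = ⊤ := by rw [← ocTop, h_inv]
  -- key identities: oc (sd u v) = sd (oc u) v = sd u (oc v)
  have key1 : ∀ u v : L, oc (sd u v) = sd (oc u) v := by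
    intro u v
    rw [← h2' (sd u v), hGEQL1, h2']
  have key2 : ∀ u v : L, oc (sd u v) = sd u (oc v) := by
    intro u v
    rw [← h2 (sd u v), ← hGEQL1, h2]
  have keyoc : ∀ u v : L, sd u v = sd (oc u) (oc v) := by
    intro u v
    rw [← h_inv (sd u v), key1, key2]
  -- ⊥ is a left unit
  have bot_unit : ∀ a : L, sd ⊥ a = a := by
    intro a
    rw [← ocTop, ← key1, h2', h_inv]
  -- a ⊔ oc a = ⊤
  have join_compl : ∀ a : L, a ⊔ oc a = ⊤ := by
    intro a
    have h1 : oc (a ⊔ oc a) ≤ a ⊓ oc a := by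
      refine le_inf ?_ ?_
      · have := h_anti _ _ (le_sup_right : oc a ≤ a ⊔ oc a)
        rwa [h_inv] at this
      · exact h_anti _ _ (le_sup_left : a ≤ a ⊔ oc a)
    rw [h_compl] at h1
    have h1' : oc (a ⊔ oc a) = ⊥ := le_antisymm h1 bot_le
    have := congrArg oc h1'
    rwa [h_inv, ocBot] at this
  -- sd a a = ⊥
  have sd_self : ∀ a : L, sd a a = ⊥ := by
    intro a
    have hu1 : oc (sd a (oc a)) = sd a a := by rw [key2, h_inv]
    have hle1 : sd a a ≤ a := hGEQL3 a a a le_rfl le_rfl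
    have hge1 : oc a ≤ sd a (oc a) := by
      have := h_anti _ _ (hu1 ▸ hle1 : oc (sd a (oc a)) ≤ a)
      rwa [h_inv] at this
    have hu2 : sd a (oc a) = sd (oc a) a := by
      rw [keyoc (oc a) a, h_inv]
    have hu3 : oc (sd (oc a) a) = sd (oc a) (oc a) := key2 (oc a) a
    have hle2 : oc (sd (oc a) a) ≤ oc a := by
      rw [hu3]; exact hGEQL3 _ _ _ le_rfl le_rfl
    have hge2 : a ≤ sd a (oc a) := by
      have := h_anti _ _ hle2
      simp only [h_inv] at this
      rwa [← hu2] at this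
    have htop : sd a (oc a) = ⊤ := by
      have : (⊤ : L) ≤ sd a (oc a) := by
        rw [← join_compl a]; exact sup_le hge2 hge1
      exact le_antisymm le_top this
    have := congrArg oc htop
    rwa [hu1, ocTop] at this
  -- main argument
  intro x y hxy
  set d := sd x y with hd
  have hdy : d ≤ y := hGEQL3 x y y hxy le_rfl
  have hdocx : d ≤ oc x := by
    rw [hd, keyoc x y]
    exact hGEQL3 _ _ _ le_rfl (h_anti _ _ hxy)
  have hyxd : y = sd x d := by
    rw [hd, hGEQL1, sd_self, bot_unit]
  have hyle : y ≤ x ⊔ (y ⊓ oc x) := by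
    calc y = sd x d := hyxd
      _ ≤ x ⊔ (y ⊓ oc x) := hGEQL3 _ _ _ le_sup_left
          (le_trans (le_inf hdy hdocx) le_sup_right)
  exact le_antisymm hyle (sup_le hxy inf_le_left)
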